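/- Let A be a skew field (division ring) and R = A[∂; σ, δ] an Ore extension with σ an automorphism of A. Let a, b, c, d ∈ R \ {0} and suppose there exist unimodular matrices U, V ∈ R^{2×2} with U·Diag(a,b)·V = Diag(c,d). Then deg(a) + deg(b) = deg(c) + deg(d), where deg denotes degree in ∂. -/

import Mathlib

/-- An Ore extension (skew polynomial ring) `R = A[∂; σ, δ]`: it contains `A` via `ι`,
the distinguished element `d = ∂` satisfies the commutation rule
`∂ · a = σ(a) · ∂ + δ(a)`, and every element of `R` has a unique representation
as a polynomial `∑ ι(aₙ) ∂ⁿ` with left coefficients in `A`. -/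
structure OreExtension (A : Type*) [Ring A] (R : Type*) [Ring R]
    (σ : A →+* A) (δ : A →+ A) : Type _ where
  ι : A →+* R
  d : R
  comm : ∀ a : A, d * ι a = ι (σ a) * d + ι (δ a)
  coeff : R ≃+ (ℕ →₀ A)
  coeff_symm : ∀ p : ℕ →₀ A, coeff.symm p = p.sum fun n a => ι a * d ^ n

/-- The degree in `∂` of an element of an Ore extension (`0` has degree `0`). -/
noncomputable def OreExtension.deg {A : Type*} [Ring A] {R : Type*} [Ring R]
    {σ : A →+* A} {δ : A →+ A} (e : OreExtension A R σ δ) (r : R) : ℕ :=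
  (e.coeff r).support.sup id

set_option maxHeartbeats 1000000

namespace OreExtension

variable {A R : Type*} [DivisionRing A] [Ring R] {σ : A →+* A} {δ : A →+ A}
  (e : OreExtension A R σ δ)

theorem coeff_symm_single (n : ℕ) (a : A) :
    e.coeff.symm (Finsupp.single n a) = e.ι a * e.d ^ n := by
  rw [e.coeff_symm, Finsupp.sum_single_index]
  simp

theorem coeff_basis (n : ℕ) (a : A) :
    e.coeff (e.ι a * e.d ^ n) = Finsupp.single n a := by
  rw [← e.coeff_symm_single, AddEquiv.apply_symm_apply]

theorem sum_coeff (r : R) :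
    ∑ n ∈ (e.coeff r).support, e.ι (e.coeff r n) * e.d ^ n = r := by
  have := e.coeff_symm (e.coeff r)
  rw [AddEquiv.symm_apply_apply] at this
  exact (this.trans rfl).symm

/-- `Bnd e k r` : all coefficients of `r` in degrees `≥ k` vanish. -/
def Bnd (k : ℕ) (r : R) : Prop := ∀ m, k ≤ m → e.coeff r m = 0

theorem bnd_zero (k : ℕ) : e.Bnd k (0 : R) := by intro m _; simp

theorem bnd_mono {k k' : ℕ} (h : k ≤ k') {r : R} (hr : e.Bnd k r) : e.Bnd k' r :=
  fun m hm => hr m (h.trans hm)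

theorem bnd_add {k : ℕ} {r s : R} (hr : e.Bnd k r) (hs : e.Bnd k s) :
    e.Bnd k (r + s) := by
  intro m hm; rw [map_add, Finsupp.add_apply, hr m hm, hs m hm, add_zero]

theorem bnd_sum {k : ℕ} {ι' : Type*} (t : Finset ι') (f : ι' → R)
    (h : ∀ i ∈ t, e.Bnd k (f i)) : e.Bnd k (∑ i ∈ t, f i) := by
  classical
  induction t using Finset.induction_on with
  | empty => simpa using e.bnd_zero k
  | insert _ _ hx ih =>
    rw [Finset.sum_insert hx]
    exact e.bnd_add (h _ (Finset.mem_insert_self _ _))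
      (ih fun i hi => h i (Finset.mem_insert_of_mem hi))

theorem bnd_basis (n : ℕ) (a : A) : e.Bnd (n + 1) (e.ι a * e.d ^ n) := by
  intro m hm
  rw [e.coeff_basis, Finsupp.single_apply, if_neg (by omega)]

theorem eq_zero_of_bnd_zero {r : R} (h : e.Bnd 0 r) : r = 0 := by
  have : e.coeff r = 0 := Finsupp.ext fun m => h m (Nat.zero_le m)
  have := congrArg e.coeff.symm this
  rwa [AddEquiv.symm_apply_apply, map_zero] at this

theorem coeff_iota_mul (a : A) (r : R) (m : ℕ) :
    e.coeff (e.ι a * r) m = a * e.coeff r m := by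
  classical
  conv_lhs => rw [← e.sum_coeff r]
  rw [Finset.mul_sum]
  have : ∀ n ∈ (e.coeff r).support,
      e.ι a * (e.ι (e.coeff r n) * e.d ^ n) = e.ι (a * e.coeff r n) * e.d ^ n := by
    intro n _; rw [← mul_assoc, ← map_mul]
  rw [Finset.sum_congr rfl this, map_sum, Finsupp.finset_sum_apply]
  simp only [e.coeff_basis, Finsupp.single_apply]
  rw [Finset.sum_ite_eq' (e.coeff r).support m (fun n => a * e.coeff r n)]
  by_cases hm : m ∈ (e.coeff r).support
  · rw [if_pos hm]
  · rw [if_neg hm, Finsupp.notMem_support_iff.mp hm, mul_zero]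

theorem coeff_mul_dpow (r : R) (k m : ℕ) :
    e.coeff (r * e.d ^ k) m = if k ≤ m then e.coeff r (m - k) else 0 := by
  classical
  conv_lhs => rw [← e.sum_coeff r]
  rw [Finset.sum_mul]
  have : ∀ n ∈ (e.coeff r).support,
      e.ι (e.coeff r n) * e.d ^ n * e.d ^ k = e.ι (e.coeff r n) * e.d ^ (n + k) := by
    intro n _; rw [mul_assoc, ← pow_add]
  rw [Finset.sum_congr rfl this, map_sum, Finsupp.finset_sum_apply]
  simp only [e.coeff_basis, Finsupp.single_apply]
  by_cases hk : k ≤ m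
  · have : ∀ n ∈ (e.coeff r).support,
        (if n + k = m then e.coeff r n else 0) = (if n = m - k then e.coeff r n else 0) := by
      intro n _; congr 1; simp only [eq_iff_iff]; omega
    rw [Finset.sum_congr rfl this,
      Finset.sum_ite_eq' (e.coeff r).support (m - k) (fun n => e.coeff r n), if_pos hk]
    by_cases hm : m - k ∈ (e.coeff r).support
    · rw [if_pos hm]
    · rw [if_neg hm, Finsupp.notMem_support_iff.mp hm]
  · rw [if_neg hk]
    apply Finset.sum_eq_zero
    intro n _
    rw [if_neg (by omega)]


theorem coeff_add_apply (u v : R) (m : ℕ) :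
    e.coeff (u + v) m = e.coeff u m + e.coeff v m := by
  rw [map_add, Finsupp.add_apply]

theorem bnd_d_mul {k : ℕ} {r : R} (hr : e.Bnd k r) : e.Bnd (k + 1) (e.d * r) := by
  classical
  intro m hm
  conv_lhs => rw [← e.sum_coeff r]
  rw [Finset.mul_sum]
  have step : ∀ n ∈ (e.coeff r).support,
      e.d * (e.ι (e.coeff r n) * e.d ^ n)
        = e.ι (σ (e.coeff r n)) * e.d ^ (n + 1) + e.ι (δ (e.coeff r n)) * e.d ^ n := by
    intro n _
    rw [← mul_assoc, e.comm, add_mul, mul_assoc, ← pow_succ']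
  rw [Finset.sum_congr rfl step, map_sum, Finsupp.finset_sum_apply]
  apply Finset.sum_eq_zero
  intro n hn
  have hnk : n < k := by
    by_contra hc
    exact Finsupp.mem_support_iff.mp hn (hr n (by omega))
  rw [map_add, Finsupp.add_apply, e.coeff_basis, e.coeff_basis,
    Finsupp.single_apply, Finsupp.single_apply, if_neg (by omega), if_neg (by omega), add_zero]

theorem dpow_mul_iota (k : ℕ) (a : A) :
    ∃ r, e.d ^ k * e.ι a = e.ι ((σ ^ k) a) * e.d ^ k + r ∧ e.Bnd k r := by
  induction k with
  | zero =>
    exact ⟨0, by simp, e.bnd_zero 0⟩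
  | succ k ih =>
    obtain ⟨r, hr, hb⟩ := ih
    refine ⟨e.ι (δ ((σ ^ k) a)) * e.d ^ k + e.d * r, ?_, ?_⟩
    · rw [pow_succ', mul_assoc, hr, mul_add, ← mul_assoc, e.comm, add_mul, mul_assoc, ← pow_succ']
      have : (σ ^ (k + 1)) a = σ ((σ ^ k) a) := by
        rw [pow_succ', RingHom.mul_def, RingHom.comp_apply]
      rw [this, add_assoc]
    · exact e.bnd_add (e.bnd_mono (by omega) (e.bnd_basis k _)) (e.bnd_d_mul hb)

theorem basis_mul (a b : A) (m n : ℕ) :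
    ∃ s, (e.ι a * e.d ^ m) * (e.ι b * e.d ^ n)
        = e.ι (a * (σ ^ m) b) * e.d ^ (m + n) + s ∧ e.Bnd (m + n) s := by
  obtain ⟨r, hr, hb⟩ := e.dpow_mul_iota m b
  refine ⟨e.ι a * (r * e.d ^ n), ?_, ?_⟩
  · have asc : e.ι a * e.d ^ m * (e.ι b * e.d ^ n) = e.ι a * ((e.d ^ m * e.ι b) * e.d ^ n) :=
      (mul_assoc (e.ι a) (e.d ^ m) (e.ι b * e.d ^ n)).trans
        (congrArg (fun z => e.ι a * z) (mul_assoc (e.d ^ m) (e.ι b) (e.d ^ n)).symm)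
    rw [asc, hr, add_mul, mul_add, ← mul_assoc, ← mul_assoc, ← map_mul, mul_assoc, ← pow_add]
  · intro j hj
    rw [e.coeff_iota_mul, e.coeff_mul_dpow]
    by_cases hn : n ≤ j
    · rw [if_pos hn, hb (j - n) (by omega), mul_zero]
    · rw [if_neg hn, mul_zero]

/-- Key degree bound for products. -/
theorem coeff_mul_eq_zero {k l : ℕ} {x y : R} (hx : e.Bnd k x) (hy : e.Bnd l y)
    (j : ℕ) (hj : k + l ≤ j + 1) : e.coeff (x * y) j = 0 := by
  classical
  conv_lhs => rw [← e.sum_coeff x, ← e.sum_coeff y]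
  rw [Finset.sum_mul_sum]
  rw [map_sum, Finsupp.finset_sum_apply]
  apply Finset.sum_eq_zero
  intro m hm
  rw [map_sum, Finsupp.finset_sum_apply]
  apply Finset.sum_eq_zero
  intro n hn
  have hmk : m < k := by
    by_contra hc
    exact Finsupp.mem_support_iff.mp hm (hx m (by omega))
  have hnl : n < l := by
    by_contra hc
    exact Finsupp.mem_support_iff.mp hn (hy n (by omega))
  obtain ⟨s, hs, hbs⟩ := e.basis_mul (e.coeff x m) (e.coeff y n) m n
  rw [hs, map_add, Finsupp.add_apply, e.coeff_basis, Finsupp.single_apply,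
    if_neg (by omega), hbs j (by omega), add_zero]

/-- Decomposition of an element into top coefficient and lower part. -/
theorem decomp {k : ℕ} {r : R} (hr : e.Bnd (k + 1) r) :
    ∃ x, r = e.ι (e.coeff r k) * e.d ^ k + x ∧ e.Bnd k x := by
  refine ⟨r - e.ι (e.coeff r k) * e.d ^ k, by abel, ?_⟩
  intro m hm
  rw [map_sub, Finsupp.sub_apply, e.coeff_basis, Finsupp.single_apply]
  by_cases hmk : m = k
  · subst hmk; rw [if_pos rfl, sub_self]
  · rw [if_neg (fun h => hmk h.symm), hr m (by omega), sub_zero]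

theorem coeff_mul_top {k l : ℕ} {x y : R} (hx : e.Bnd (k + 1) x) (hy : e.Bnd (l + 1) y) :
    e.coeff (x * y) (k + l) = e.coeff x k * (σ ^ k) (e.coeff y l) := by
  obtain ⟨x', hx', hbx⟩ := e.decomp hx
  obtain ⟨y', hy', hby⟩ := e.decomp hy
  obtain ⟨s, hs, hbs⟩ := e.basis_mul (e.coeff x k) (e.coeff y l) k l
  have expand : ∀ p q u v : R, (p + u) * (q + v) = p * q + (p * v + (u * q + u * v)) := by
    intros; noncomm_ring
  conv_lhs => rw [hx', hy', expand]
  rw [e.coeff_add_apply, e.coeff_add_apply, e.coeff_add_apply,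
    e.coeff_mul_eq_zero (e.bnd_basis k _) hby (k + l) (by omega),
    e.coeff_mul_eq_zero hbx (e.bnd_basis l _) (k + l) (by omega),
    e.coeff_mul_eq_zero hbx hby (k + l) (by omega),
    hs, e.coeff_add_apply, e.coeff_basis, Finsupp.single_eq_same,
    hbs (k + l) (le_refl _)]
  simp
theorem bnd_deg (r : R) : e.Bnd (e.deg r + 1) r := by
  intro m hm
  by_contra hc
  have h1 : m ∈ (e.coeff r).support := Finsupp.mem_support_iff.mpr hc
  have h2 : m ≤ e.deg r := Finset.le_sup (f := id) h1
  omega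

theorem deg_le_of_bnd {k : ℕ} {r : R} (h : e.Bnd (k + 1) r) : e.deg r ≤ k := by
  apply Finset.sup_le
  intro m hm
  show m ≤ k
  by_contra hc
  exact Finsupp.mem_support_iff.mp hm (h m (by omega))

theorem lc_ne_zero {r : R} (hr : r ≠ 0) : e.coeff r (e.deg r) ≠ 0 := by
  have hne : (e.coeff r).support.Nonempty := by
    rw [Finsupp.support_nonempty_iff]
    intro hc
    apply hr
    have := congrArg e.coeff.symm hc
    rwa [AddEquiv.symm_apply_apply, map_zero] at this
  have : e.deg r ∈ (e.coeff r).support := by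
    obtain ⟨m, hm, hm2⟩ := Finset.exists_mem_eq_sup _ hne id
    rw [OreExtension.deg, hm2]
    exact hm
  exact Finsupp.mem_support_iff.mp this

theorem sigma_pow_injective (hσ : Function.Injective σ) (k : ℕ) :
    Function.Injective (σ ^ k : A →+* A) := by
  rw [RingHom.coe_pow]
  exact Function.Injective.iterate hσ k

theorem coeff_mul_deg (hσ : Function.Injective σ) {x y : R} (hx : x ≠ 0) (hy : y ≠ 0) :
    e.coeff (x * y) (e.deg x + e.deg y) ≠ 0 := by
  rw [e.coeff_mul_top (e.bnd_deg x) (e.bnd_deg y)]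
  refine mul_ne_zero (e.lc_ne_zero hx) ?_
  intro hc
  exact e.lc_ne_zero hy (sigma_pow_injective hσ _ (by rw [hc, map_zero]))

/-- Division algorithm : right division by a nonzero element. -/
theorem division (hσ : Function.Injective σ) {m : R} (hm : m ≠ 0) (r : R) :
    ∃ q s, r = q * m + s ∧ e.Bnd (e.deg m) s := by
  suffices H : ∀ n r, e.Bnd n r → ∃ q s, r = q * m + s ∧ e.Bnd (e.deg m) s by
    exact H (e.deg r + 1) r (e.bnd_deg r)
  intro n
  induction n using Nat.strong_induction_on with
  | _ n ih =>
    intro r hr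
    by_cases hn : n ≤ e.deg m
    · exact ⟨0, r, by rw [zero_mul, zero_add], e.bnd_mono hn hr⟩
    · push_neg at hn
      obtain ⟨k, rfl⟩ : ∃ k, n = k + 1 := ⟨n - 1, by omega⟩
      have htk : e.deg m ≤ k := by omega
      set t := e.deg m with ht
      set c := e.coeff r k * ((σ ^ (k - t)) (e.coeff m t))⁻¹ with hcdef
      set q0 : R := e.ι c * e.d ^ (k - t) with hq0
      have hb1 : e.Bnd (k - t + 1) q0 := e.bnd_basis _ _
      have hcoeffq0 : e.coeff q0 (k - t) = c := by
        rw [hq0, e.coeff_basis, Finsupp.single_eq_same]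
      have hnz : (σ ^ (k - t)) (e.coeff m t) ≠ 0 := by
        intro hz
        exact e.lc_ne_zero hm (sigma_pow_injective hσ _ (by rw [hz, map_zero]))
      have key : e.coeff (q0 * m) k = e.coeff r k := by
        have h2 : e.coeff (q0 * m) (k - t + t)
            = e.coeff q0 (k - t) * (σ ^ (k - t)) (e.coeff m t) :=
          e.coeff_mul_top hb1 (e.bnd_deg m)
        have h3 : k - t + t = k := by omega
        rw [h3] at h2
        rw [h2, hcoeffq0, hcdef, mul_assoc, inv_mul_cancel₀ hnz, mul_one]
      have hbr' : e.Bnd k (r - q0 * m) := by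
        intro j hj
        rw [map_sub, Finsupp.sub_apply]
        rcases eq_or_lt_of_le hj with hjk | hjk
        · rw [← hjk, key, sub_self]
        · rw [hr j (by omega), e.coeff_mul_eq_zero hb1 (e.bnd_deg m) j (by omega), sub_zero]
      obtain ⟨q', s, hqs, hbs⟩ := ih k (by omega) (r - q0 * m) hbr'
      exact ⟨q' + q0, s, by rw [add_mul, sub_eq_iff_eq_add.mp hqs]; abel, hbs⟩

theorem coeff_smul (a : A) (r : R) : e.coeff (e.ι a * r) = a • e.coeff r :=
  Finsupp.ext fun m => by rw [e.coeff_iota_mul, Finsupp.smul_apply, smul_eq_mul]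

theorem symm_smul (a : A) (p : ℕ →₀ A) :
    e.coeff.symm (a • p) = e.ι a * e.coeff.symm p := by
  apply e.coeff.injective
  rw [AddEquiv.apply_symm_apply, e.coeff_smul, AddEquiv.apply_symm_apply]

/-- The `A`-submodule of `ℕ →₀ A` corresponding to the left ideal `Rm`. -/
def quotSub (m : R) : Submodule A (ℕ →₀ A) where
  carrier := {p | ∃ q, e.coeff.symm p = q * m}
  add_mem' := by
    rintro p1 p2 ⟨q1, h1⟩ ⟨q2, h2⟩
    exact ⟨q1 + q2, by rw [map_add, h1, h2, add_mul]⟩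
  zero_mem' := ⟨0, by rw [map_zero, zero_mul]⟩
  smul_mem' := by
    rintro a p ⟨q, hq⟩
    exact ⟨e.ι a * q, by rw [e.symm_smul, hq, mul_assoc]⟩

theorem mem_quotSub {m : R} {p : ℕ →₀ A} :
    p ∈ e.quotSub m ↔ ∃ q, e.coeff.symm p = q * m := Iff.rfl

theorem sum_single_fin_apply {t : ℕ} (u : Finset (Fin t)) (g : Fin t → A) (i : Fin t)
    (hi : i ∈ u) : (∑ j ∈ u, Finsupp.single (j : ℕ) (g j)) (i : ℕ) = g i := by
  classical
  rw [Finsupp.finset_sum_apply]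
  have : ∀ j ∈ u, (Finsupp.single (j : ℕ) (g j)) (i : ℕ)
      = if j = i then g j else 0 := by
    intro j _
    rw [Finsupp.single_apply]
    congr 1
    simp [Fin.val_eq_val]
  rw [Finset.sum_congr rfl this, Finset.sum_ite_eq' u i g, if_pos hi]

theorem sum_single_fin_apply_ge {t : ℕ} (u : Finset (Fin t)) (g : Fin t → A) (n : ℕ)
    (hn : t ≤ n) : (∑ j ∈ u, Finsupp.single (j : ℕ) (g j)) n = 0 := by
  rw [Finsupp.finset_sum_apply]
  apply Finset.sum_eq_zero
  intro j _
  rw [Finsupp.single_apply, if_neg (by omega)]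

/-- The standard basis of the quotient `(ℕ →₀ A) ⧸ S_m`. -/
noncomputable def basisQuot (hσ : Function.Injective σ) {m : R} (hm : m ≠ 0) :
    Module.Basis (Fin (e.deg m)) A ((ℕ →₀ A) ⧸ e.quotSub m) := by
  apply Module.Basis.mk (v := fun i : Fin (e.deg m) =>
    (e.quotSub m).mkQ (Finsupp.single (i : ℕ) (1 : A)))
  · rw [linearIndependent_iff']
    intro u g hsum i hi
    have h1 : (e.quotSub m).mkQ (∑ j ∈ u, Finsupp.single (j : ℕ) (g j)) = 0 := by
      rw [map_sum, ← hsum]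
      apply Finset.sum_congr rfl
      intro j _
      rw [← map_smul, Finsupp.smul_single', mul_one]
    rw [Submodule.mkQ_apply, Submodule.Quotient.mk_eq_zero] at h1
    obtain ⟨q, hq⟩ := h1
    by_cases hq0 : q = 0
    · rw [hq0, zero_mul] at hq
      have : (∑ j ∈ u, Finsupp.single (j : ℕ) (g j)) = 0 := by
        apply e.coeff.symm.injective
        rw [hq, map_zero]
      have h3 := sum_single_fin_apply u g i hi
      rw [this] at h3
      simpa using h3.symm
    · exfalso
      apply coeff_mul_deg e hσ hq0 hm
      rw [← hq, AddEquiv.apply_symm_apply]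
      exact sum_single_fin_apply_ge u g _ (by omega)
  · rintro x -
    obtain ⟨p, rfl⟩ := Submodule.Quotient.mk_surjective _ x
    obtain ⟨q, s, hqs, hbs⟩ := e.division hσ hm (e.coeff.symm p)
    have h1 : (Submodule.Quotient.mk p : (ℕ →₀ A) ⧸ e.quotSub m)
        = Submodule.Quotient.mk (e.coeff s) := by
      rw [Submodule.Quotient.eq]
      exact ⟨q, by rw [map_sub, AddEquiv.symm_apply_apply, hqs, add_sub_cancel_right]⟩
    rw [h1]
    have h2 : e.coeff s = ∑ n ∈ (e.coeff s).support,
        (e.coeff s) n • Finsupp.single n (1 : A) := by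
      conv_lhs => rw [← Finsupp.sum_single (e.coeff s)]
      apply Finset.sum_congr rfl
      intro n _
      rw [Finsupp.smul_single', mul_one]
    show (e.quotSub m).mkQ _ ∈ _
    rw [h2, map_sum]
    apply Submodule.sum_mem
    intro n hn
    have hlt : n < e.deg m := by
      by_contra hc
      exact Finsupp.mem_support_iff.mp hn (hbs n (by omega))
    rw [map_smul]
    exact Submodule.smul_mem _ _
      (Submodule.subset_span ⟨⟨n, hlt⟩, rfl⟩)

theorem finrank_quot (hσ : Function.Injective σ) {m : R} (hm : m ≠ 0) :
    Module.finrank A ((ℕ →₀ A) ⧸ e.quotSub m) = e.deg m := by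
  rw [Module.finrank_eq_card_basis (e.basisQuot hσ hm), Fintype.card_fin]

/-- Right multiplication of row vectors by the matrix `W`, transported through `coeff`,
as an `A`-linear endomorphism of `Fin 2 → (ℕ →₀ A)`. -/
noncomputable def psi (W : Matrix (Fin 2) (Fin 2) R) :
    (Fin 2 → (ℕ →₀ A)) →ₗ[A] (Fin 2 → (ℕ →₀ A)) where
  toFun x := fun j => e.coeff (∑ i, e.coeff.symm (x i) * W i j)
  map_add' x y := by
    funext j
    simp only [Pi.add_apply, map_add, add_mul, Finset.sum_add_distrib]
  map_smul' a x := by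
    funext j
    simp only [Pi.smul_apply, RingHom.id_apply]
    have h1 : ∀ i : Fin 2, e.coeff.symm (a • x i) * W i j
        = e.ι a * (e.coeff.symm (x i) * W i j) := by
      intro i
      rw [e.symm_smul, mul_assoc]
    rw [Finset.sum_congr rfl (fun i _ => h1 i), ← Finset.mul_sum, e.coeff_smul]

theorem psi_apply (W : Matrix (Fin 2) (Fin 2) R) (x : Fin 2 → (ℕ →₀ A)) (j : Fin 2) :
    e.psi W x j = e.coeff (∑ i, e.coeff.symm (x i) * W i j) := rfl

theorem psi_psi (W₁ W₂ : Matrix (Fin 2) (Fin 2) R) (x : Fin 2 → (ℕ →₀ A)) :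
    e.psi W₂ (e.psi W₁ x) = e.psi (W₁ * W₂) x := by
  funext j
  simp only [psi_apply, AddEquiv.symm_apply_apply]
  congr 1
  calc ∑ i, (∑ k, e.coeff.symm (x k) * W₁ k i) * W₂ i j
      = ∑ i, ∑ k, e.coeff.symm (x k) * (W₁ k i * W₂ i j) := by
        apply Finset.sum_congr rfl
        intro i _
        rw [Finset.sum_mul]
        exact Finset.sum_congr rfl fun k _ => mul_assoc _ _ _
    _ = ∑ k, ∑ i, e.coeff.symm (x k) * (W₁ k i * W₂ i j) := Finset.sum_comm
    _ = ∑ k, e.coeff.symm (x k) * (W₁ * W₂) k j := by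
        apply Finset.sum_congr rfl
        intro k _
        rw [← Finset.mul_sum, Matrix.mul_apply]

theorem psi_one (x : Fin 2 → (ℕ →₀ A)) : e.psi 1 x = x := by
  funext j
  rw [psi_apply]
  have h1 : ∀ i : Fin 2, e.coeff.symm (x i) * (1 : Matrix (Fin 2) (Fin 2) R) i j
      = if i = j then e.coeff.symm (x i) else 0 := by
    intro i
    rw [Matrix.one_apply]
    split <;> simp
  rw [Finset.sum_congr rfl (fun i _ => h1 i),
    Finset.sum_ite_eq' Finset.univ j (fun i => e.coeff.symm (x i)),
    if_pos (Finset.mem_univ j), AddEquiv.apply_symm_apply]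

/-- `psi` of an invertible matrix, as a linear equivalence. -/
noncomputable def psiEquiv {W : Matrix (Fin 2) (Fin 2) R} (hW : IsUnit W) :
    (Fin 2 → (ℕ →₀ A)) ≃ₗ[A] (Fin 2 → (ℕ →₀ A)) :=
  LinearEquiv.ofLinear (e.psi W) (e.psi hW.unit⁻¹.val)
    (LinearMap.ext fun x => by
      rw [LinearMap.comp_apply, e.psi_psi, hW.val_inv_mul, e.psi_one, LinearMap.id_apply])
    (LinearMap.ext fun x => by
      rw [LinearMap.comp_apply, e.psi_psi, hW.mul_val_inv, e.psi_one, LinearMap.id_apply])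

theorem psiEquiv_apply {W : Matrix (Fin 2) (Fin 2) R} (hW : IsUnit W)
    (x : Fin 2 → (ℕ →₀ A)) : e.psiEquiv hW x = e.psi W x := rfl

theorem range_psi_diagonal (v : Fin 2 → R) :
    LinearMap.range (e.psi (Matrix.diagonal v))
      = Submodule.pi Set.univ (fun j => e.quotSub (v j)) := by
  have collapse : ∀ (x : Fin 2 → (ℕ →₀ A)) (j : Fin 2),
      ∑ i, e.coeff.symm (x i) * (Matrix.diagonal v) i j = e.coeff.symm (x j) * v j := by
    intro x j
    rw [Finset.sum_eq_single_of_mem j (Finset.mem_univ j)]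
    · rw [Matrix.diagonal_apply_eq]
    · intro i _ hij
      rw [Matrix.diagonal_apply_ne _ hij, mul_zero]
  ext y
  constructor
  · rintro ⟨x, rfl⟩ j -
    refine ⟨e.coeff.symm (x j), ?_⟩
    rw [psi_apply, collapse, AddEquiv.symm_apply_apply]
  · intro hy
    choose q hq using fun j => hy j (Set.mem_univ j)
    refine ⟨fun j => e.coeff (q j), ?_⟩
    funext j
    rw [psi_apply, collapse]
    simp only [AddEquiv.symm_apply_apply]
    rw [← hq j, AddEquiv.apply_symm_apply]

theorem finrank_coker_diagonal (hσ : Function.Injective σ) {x y : R}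
    (hx : x ≠ 0) (hy : y ≠ 0) :
    Module.finrank A ((Fin 2 → (ℕ →₀ A)) ⧸ LinearMap.range (e.psi (Matrix.diagonal ![x, y])))
      = e.deg x + e.deg y := by
  classical
  set F : (Fin 2 → (ℕ →₀ A)) →ₗ[A] ((ℕ →₀ A) ⧸ e.quotSub x) × ((ℕ →₀ A) ⧸ e.quotSub y) :=
    ((e.quotSub x).mkQ.comp (LinearMap.proj 0)).prod
      ((e.quotSub y).mkQ.comp (LinearMap.proj 1)) with hF
  have hker : LinearMap.range (e.psi (Matrix.diagonal ![x, y])) = LinearMap.ker F := by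
    rw [e.range_psi_diagonal]
    ext z
    rw [Submodule.mem_pi, LinearMap.mem_ker, hF]
    constructor
    · intro hz
      have h0 := hz 0 (Set.mem_univ 0)
      have h1 := hz 1 (Set.mem_univ 1)
      apply Prod.ext
      · simpa [Submodule.Quotient.mk_eq_zero] using h0
      · simpa [Submodule.Quotient.mk_eq_zero] using h1
    · intro hz j _
      have h0 : (e.quotSub x).mkQ (z 0) = 0 := congrArg Prod.fst hz
      have h1 : (e.quotSub y).mkQ (z 1) = 0 := congrArg Prod.snd hz
      rw [Submodule.mkQ_apply, Submodule.Quotient.mk_eq_zero] at h0 h1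
      fin_cases j
      · exact h0
      · exact h1
  have hsurj : Function.Surjective F := by
    rintro ⟨y0, y1⟩
    obtain ⟨p0, rfl⟩ := Submodule.Quotient.mk_surjective _ y0
    obtain ⟨p1, rfl⟩ := Submodule.Quotient.mk_surjective _ y1
    exact ⟨![p0, p1], rfl⟩
  calc Module.finrank A
        ((Fin 2 → (ℕ →₀ A)) ⧸ LinearMap.range (e.psi (Matrix.diagonal ![x, y])))
      = Module.finrank A ((Fin 2 → (ℕ →₀ A)) ⧸ LinearMap.ker F) :=
        LinearEquiv.finrank_eq (Submodule.quotEquivOfEq _ _ hker)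
    _ = Module.finrank A (((ℕ →₀ A) ⧸ e.quotSub x) × ((ℕ →₀ A) ⧸ e.quotSub y)) :=
        LinearEquiv.finrank_eq (F.quotKerEquivOfSurjective hsurj)
    _ = e.deg x + e.deg y := by
        rw [Module.finrank_eq_card_basis ((e.basisQuot hσ hx).prod (e.basisQuot hσ hy)),
          Fintype.card_sum, Fintype.card_fin, Fintype.card_fin]

end OreExtension

/-- Let `R = A[∂; σ, δ]` be an Ore extension of a skew field `A` with `σ` an
automorphism. If `Diag(a,b)` and `Diag(c,d)` are equivalent via unimodular matrices
`U, V` (i.e. `U·Diag(a,b)·V = Diag(c,d)`) with `a, b, c, d` nonzero, then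
`deg a + deg b = deg c + deg d`. -/
theorem deg_sum_invariant {A R : Type*} [DivisionRing A] [Ring R]
    (σ : A →+* A) (δ : A →+ A) (hσ : Function.Bijective σ)
    (hδ : ∀ a b : A, δ (a * b) = σ a * δ b + δ a * b)
    (e : OreExtension A R σ δ)
    (a b c d : R) (ha : a ≠ 0) (hb : b ≠ 0) (hc : c ≠ 0) (hd : d ≠ 0)
    (U V : Matrix (Fin 2) (Fin 2) R) (hU : IsUnit U) (hV : IsUnit V)
    (h : U * Matrix.diagonal ![a, b] * V = Matrix.diagonal ![c, d]) :
    e.deg a + e.deg b = e.deg c + e.deg d := by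
  classical
  set D := Matrix.diagonal ![a, b] with hD
  set D' := Matrix.diagonal ![c, d] with hD'
  have hmap : (LinearMap.range (e.psi D)).map (e.psiEquiv hV).toLinearMap
      = LinearMap.range (e.psi D') := by
    ext z
    simp only [Submodule.mem_map, LinearMap.mem_range]
    constructor
    · rintro ⟨-, ⟨w, rfl⟩, rfl⟩
      refine ⟨e.psi hU.unit⁻¹.val w, ?_⟩
      rw [LinearEquiv.coe_coe, e.psiEquiv_apply, e.psi_psi, e.psi_psi, ← h, ← mul_assoc, ← mul_assoc,
        hU.val_inv_mul, one_mul]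
    · rintro ⟨w, rfl⟩
      refine ⟨e.psi D (e.psi U w), ⟨e.psi U w, rfl⟩, ?_⟩
      rw [LinearEquiv.coe_coe, e.psiEquiv_apply, e.psi_psi, e.psi_psi, ← mul_assoc, h]
  have hfr := LinearEquiv.finrank_eq
    (Submodule.Quotient.equiv (LinearMap.range (e.psi D)) (LinearMap.range (e.psi D'))
      (e.psiEquiv hV) hmap)
  rwa [e.finrank_coker_diagonal hσ.injective ha hb,
    e.finrank_coker_diagonal hσ.injective hc hd] at hfr
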